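/- Let h and c be complex numbers with Re(conj(h) · c) > 0 and let n be a positive real number. Define f : [0, π/2] → ℝ by f(θ) = |h + ((cos θ)^(n/2)) · c|. Then θ = π/2 is not a maximizer of f on [0, π/2]: there exists θ₀ ∈ [0, π/2) with f(θ₀) > f(π/2) = |h|. Consequently, the incidence direction that maximizes the received-signal magnitude at a fixed departure direction is not the grazing direction θ = π/2, which shows that an incident direction of θ → 90° cannot be recovered as the optimal departure direction in the reversed link, i.e., beam reciprocity fails for the IOS. -/

import Mathlib

open Real Complex

/-- Beam non-reciprocity of the IOS: for `f(θ) = |h + (cos θ)^(n/2) · c|` with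
constructive interference `Re(conj(h) · c) > 0` and `n > 0`, the grazing direction
`θ = π/2` is not a maximizer of `f` on `[0, π/2]`: there exists `θ₀ ∈ [0, π/2)` with
`f(θ₀) > f(π/2)`, and moreover `f(π/2) = |h|`. -/
theorem grazing_not_maximizer
    (h c : ℂ) (hconstr : 0 < ((starRingEnd ℂ) h * c).re) (n : ℝ) (hn : 0 < n)
    (f : ℝ → ℝ)
    (hf : ∀ θ : ℝ, f θ = ‖h + ((Real.cos θ ^ (n / 2) : ℝ) : ℂ) * c‖) :
    (∃ θ₀ ∈ Set.Ico 0 (Real.pi / 2), f θ₀ > f (Real.pi / 2)) ∧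
      f (Real.pi / 2) = ‖h‖ := by
  have hpi : f (Real.pi / 2) = ‖h‖ := by
    rw [hf, Real.cos_pi_div_two, Real.zero_rpow (by positivity)]
    simp
  refine ⟨⟨0, ⟨le_refl 0, by positivity⟩, ?_⟩, hpi⟩
  rw [hpi, hf, Real.cos_zero, Real.one_rpow]
  push_cast
  rw [one_mul]
  have hsq : Complex.normSq h < Complex.normSq (h + c) := by
    rw [Complex.normSq_add]
    have hre : (h * (starRingEnd ℂ) c).re = ((starRingEnd ℂ) h * c).re := by
      rw [← Complex.conj_re ((starRingEnd ℂ) h * c)]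
      simp [mul_comm]
    nlinarith [Complex.normSq_nonneg c]
  have := Real.sqrt_lt_sqrt (Complex.normSq_nonneg h) hsq
  rwa [← Complex.norm_def, ← Complex.norm_def] at this
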